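/- In the d-dimensional diamond lattice A_d with basis vectors v_i = e_{d+1} − e_i (i = 1,...,d) in R^{d+1} and p = (v_1 + ... + v_d)/(d+1), for any n, n' ∈ Z^d the distance |v(n) − (v(n') + p)| is at least √(d/(d+1)), and equality holds if and only if n − n' is 0 or a standard basis vector e_j of Z^d. -/

import Mathlib

private lemma aux_self_le_sq (a : ℤ) : a ≤ a ^ 2 := by
  rcases le_or_gt a 0 with h | h
  · exact h.trans (sq_nonneg a)
  · nlinarith

private lemma aux_intQ (d : ℕ) (m : Fin d → ℤ) :
    0 ≤ (∑ i, m i) ^ 2 - 2 * (∑ i, m i) + ∑ i, (m i) ^ 2 ∧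
    ((∑ i, m i) ^ 2 - 2 * (∑ i, m i) + ∑ i, (m i) ^ 2 = 0 ↔
      ((∀ i, m i = 0) ∨ ∃ j, ∀ i, m i = if i = j then 1 else 0)) := by
  set S := ∑ i, m i with hS
  set T := ∑ i, (m i) ^ 2 with hT
  have hTS : S ≤ T := Finset.sum_le_sum fun i _ => aux_self_le_sq (m i)
  have hSS : S ≤ S ^ 2 := aux_self_le_sq S
  refine ⟨by linarith, ?_, ?_⟩
  · intro h
    have hS2 : S ^ 2 = S := by linarith
    have hTSeq : T = S := by linarith
    have hS01 : S = 0 ∨ S = 1 := by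
      have : S * (S - 1) = 0 := by nlinarith [hS2]
      rcases mul_eq_zero.1 this with h' | h'
      · exact Or.inl h'
      · exact Or.inr (by linarith)
    rcases hS01 with h0 | h1
    · left
      have hT0 : T = 0 := by rw [hTSeq, h0]
      intro i
      have hi := (Finset.sum_eq_zero_iff_of_nonneg (fun i _ => sq_nonneg (m i))).1
        (by rw [← hT]; exact hT0) i (Finset.mem_univ i)
      exact pow_eq_zero_iff (by norm_num) |>.1 hi
    · right
      have hT1 : T = 1 := by rw [hTSeq, h1]
      have hsum0 : ∑ i, ((m i) ^ 2 - m i) = 0 := by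
        rw [Finset.sum_sub_distrib, ← hT, ← hS, hT1, h1]; ring
      have heach : ∀ i, (m i) ^ 2 = m i := by
        intro i
        have := (Finset.sum_eq_zero_iff_of_nonneg
          (fun i _ => by linarith [aux_self_le_sq (m i)])).1 hsum0 i (Finset.mem_univ i)
        linarith
      have h01 : ∀ i, m i = 0 ∨ m i = 1 := by
        intro i
        have : m i * (m i - 1) = 0 := by nlinarith [heach i]
        rcases mul_eq_zero.1 this with h' | h'
        · exact Or.inl h'
        · exact Or.inr (by linarith)
      have hex : ∃ j, m j = 1 := by
        by_contra hno
        push_neg at hno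
        have hz : ∀ i, m i = 0 := fun i => (h01 i).resolve_right (hno i)
        have : S = 0 := by rw [hS]; exact Finset.sum_eq_zero fun i _ => hz i
        omega
      obtain ⟨j, hj⟩ := hex
      refine ⟨j, fun i => ?_⟩
      by_cases hij : i = j
      · simp [hij, hj]
      · simp only [hij, if_false]
        have hrest : ∑ i ∈ Finset.univ.erase j, m i = 0 := by
          have := Finset.add_sum_erase Finset.univ m (Finset.mem_univ j)
          rw [← hS] at this
          omega
        exact (Finset.sum_eq_zero_iff_of_nonneg
          (fun i _ => by rcases h01 i with h' | h' <;> omega)).1 hrest i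
          (Finset.mem_erase.2 ⟨hij, Finset.mem_univ i⟩)
  · rintro (h0 | ⟨j, hj⟩)
    · have hS0 : S = 0 := Finset.sum_eq_zero fun i _ => h0 i
      have hT0 : T = 0 := Finset.sum_eq_zero fun i _ => by rw [h0 i]; ring
      rw [hS0, hT0]; ring
    · have hS1 : S = 1 := by
        rw [hS, Finset.sum_congr rfl fun i _ => hj i]
        simp [Finset.sum_ite_eq']
      have hT1 : T = 1 := by
        rw [hT, Finset.sum_congr rfl fun i _ => by rw [hj i]]
        simp only [ite_pow, one_pow]
        norm_num [Finset.sum_ite_eq']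
      rw [hS1, hT1]; ring

private lemma aux_sumsq (d : ℕ) (m : Fin d → ℤ) :
    (∑ i, (-(m i : ℝ) + 1 / ((d : ℝ) + 1)) ^ 2)
      + ((∑ i, (m i : ℝ)) - (d : ℝ) / ((d : ℝ) + 1)) ^ 2
    = ((∑ i, (m i : ℝ)) ^ 2 - 2 * (∑ i, (m i : ℝ)) + ∑ i, (m i : ℝ) ^ 2)
      + (d : ℝ) / ((d : ℝ) + 1) := by
  have hd1 : (d : ℝ) + 1 ≠ 0 := by positivity
  have h1 : ∀ i : Fin d, (-(m i : ℝ) + 1 / ((d : ℝ) + 1)) ^ 2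
      = (m i : ℝ) ^ 2 - (2 / ((d : ℝ) + 1)) * (m i : ℝ) + (1 / ((d : ℝ) + 1)) ^ 2 :=
    fun i => by ring
  simp only [h1, Finset.sum_add_distrib, Finset.sum_sub_distrib, ← Finset.mul_sum,
    Finset.sum_const, Finset.card_univ, Fintype.card_fin, nsmul_eq_mul]
  field_simp
  ring

private lemma aux_sum_apply {d e : ℕ} (v : Fin d → EuclideanSpace ℝ (Fin e))
    (c : Fin d → ℝ) (j : Fin e) :
    (∑ x, c x • v x) j = ∑ x, c x * v x j := by
  rw [WithLp.ofLp_sum, Finset.sum_apply]; rfl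

private lemma aux_sum_apply' {d e : ℕ} (v : Fin d → EuclideanSpace ℝ (Fin e)) (j : Fin e) :
    (∑ x, v x) j = ∑ x, v x j := by
  rw [WithLp.ofLp_sum, Finset.sum_apply]

/-- In the `d`-dimensional diamond lattice `A_d` with basis vectors `vᵢ = e_{d+1} - eᵢ`
and `p = (v₁ + ⋯ + v_d)/(d+1)`: for all `n, n' ∈ ℤ^d`,
`|v(n) - (v(n') + p)| ≥ √(d/(d+1))`, with equality iff `n - n'` is `0` or a standard
basis vector of `ℤ^d`. -/
theorem statement12 (d : ℕ) (n n' : Fin d → ℤ)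
    (v : Fin d → EuclideanSpace ℝ (Fin (d + 1)))
    (hv : ∀ i j, v i j = (if j = Fin.last d then (1 : ℝ) else 0)
        - (if j = Fin.castSucc i then (1 : ℝ) else 0))
    (vec : (Fin d → ℤ) → EuclideanSpace ℝ (Fin (d + 1)))
    (hvec : ∀ m, vec m = ∑ i, (m i : ℝ) • v i)
    (p : EuclideanSpace ℝ (Fin (d + 1)))
    (hp : p = (1 / ((d : ℝ) + 1)) • ∑ i, v i) :
    Real.sqrt ((d : ℝ) / ((d : ℝ) + 1)) ≤ dist (vec n) (vec n' + p)
    ∧ (dist (vec n) (vec n' + p) = Real.sqrt ((d : ℝ) / ((d : ℝ) + 1)) ↔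
        (n = n' ∨ ∃ j : Fin d, ∀ i, n i - n' i = if i = j then 1 else 0)) := by
  have hd1 : (d : ℝ) + 1 ≠ 0 := by positivity
  have hcast : ∀ (m : Fin d → ℤ) (i : Fin d), vec m (Fin.castSucc i) = -(m i : ℝ) := by
    intro m i
    rw [hvec, aux_sum_apply]
    simp [hv, (Fin.castSucc_lt_last i).ne, Fin.castSucc_inj]
  have hlast : ∀ (m : Fin d → ℤ), vec m (Fin.last d) = ∑ i, (m i : ℝ) := by
    intro m
    rw [hvec, aux_sum_apply]
    simp [hv, fun i : Fin d => (Fin.castSucc_lt_last i).ne']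
  have hpcast : ∀ i : Fin d, p (Fin.castSucc i) = -(1 / ((d : ℝ) + 1)) := by
    intro i
    rw [hp, PiLp.smul_apply, aux_sum_apply']
    simp [hv, (Fin.castSucc_lt_last i).ne, Fin.castSucc_inj]
  have hplast : p (Fin.last d) = (d : ℝ) / ((d : ℝ) + 1) := by
    rw [hp, PiLp.smul_apply, aux_sum_apply']
    simp [hv, fun i : Fin d => (Fin.castSucc_lt_last i).ne']
    ring
  set m : Fin d → ℤ := fun i => n i - n' i with hm
  set Q : ℤ := (∑ i, m i) ^ 2 - 2 * (∑ i, m i) + ∑ i, (m i) ^ 2 with hQ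
  obtain ⟨hQ0, hQiff⟩ := aux_intQ d m
  have hdsq : dist (vec n) (vec n' + p) ^ 2 = (Q : ℝ) + (d : ℝ) / ((d : ℝ) + 1) := by
    rw [EuclideanSpace.dist_eq, Real.sq_sqrt (Finset.sum_nonneg fun i _ => sq_nonneg _)]
    rw [Fin.sum_univ_castSucc]
    have hcoord : ∀ i : Fin d,
        dist (vec n (Fin.castSucc i)) ((vec n' + p) (Fin.castSucc i)) ^ 2
          = (-(m i : ℝ) + 1 / ((d : ℝ) + 1)) ^ 2 := by
      intro i
      rw [Real.dist_eq, sq_abs, PiLp.add_apply, hcast n i, hcast n' i, hpcast i, hm]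
      push_cast
      ring
    have hcoordl : dist (vec n (Fin.last d)) ((vec n' + p) (Fin.last d)) ^ 2
        = ((∑ i, (m i : ℝ)) - (d : ℝ) / ((d : ℝ) + 1)) ^ 2 := by
      rw [Real.dist_eq, sq_abs, PiLp.add_apply, hlast n, hlast n', hplast, hm]
      rw [show (∑ i, ((fun i => n i - n' i) i : ℝ)) = ∑ i, ((n i : ℝ) - (n' i : ℝ)) by
        push_cast; rfl]
      rw [Finset.sum_sub_distrib]
      ring
    rw [Finset.sum_congr rfl fun i _ => hcoord i, hcoordl, aux_sumsq d m, hQ]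
    push_cast
    ring
  have hQR : (0 : ℝ) ≤ (Q : ℝ) := by exact_mod_cast hQ0
  have hdn : (0 : ℝ) ≤ dist (vec n) (vec n' + p) := dist_nonneg
  have hdval : dist (vec n) (vec n' + p)
      = Real.sqrt ((Q : ℝ) + (d : ℝ) / ((d : ℝ) + 1)) := by
    rw [← hdsq, Real.sqrt_sq hdn]
  have hc0 : (0 : ℝ) ≤ (d : ℝ) / ((d : ℝ) + 1) := by positivity
  constructor
  · rw [hdval]
    exact Real.sqrt_le_sqrt (by linarith)
  · rw [hdval, eq_comm, Real.sqrt_inj hc0 (by linarith)]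
    have hiff : ((d : ℝ) / ((d : ℝ) + 1) = (Q : ℝ) + (d : ℝ) / ((d : ℝ) + 1)) ↔ Q = 0 := by
      constructor
      · intro h
        have : (Q : ℝ) = 0 := by linarith
        exact_mod_cast this
      · intro h; rw [h]; push_cast; ring
    rw [hiff, hQiff]
    constructor
    · rintro (h0 | h)
      · left; funext i; have := h0 i; simp only [hm] at this; omega
      · right; exact h
    · rintro (h0 | h)
      · left; intro i; simp [hm, h0]
      · right; exact h
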